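/- The language L_ν = {u # v^inv : u,v ∈ {x,x̄}*, ν(u)=ν(v), μ(u)=μ(v)} is generated by the context-free grammar with nonterminals S,T,Z, start symbol S, terminals {x,x̄,#}, and productions S → ZSZ | xSx̄ | T; T → ZTZ | x̄Tx | #; Z → ZZ | x̄Zx | ε. Hence L_ν is context-free. -/

import Mathlib

/-- Step of a letter: `true` = x (+1), `false` = x̄ (-1). -/
def step (b : Bool) : ℤ := if b then 1 else -1

/-- μ(w): endpoint of the path traced by `w` starting at 0. -/
def mu (w : List Bool) : ℤ := (w.map step).sum

/-- ν(w): maximum position visited (max of μ over prefixes). -/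
def nu (w : List Bool) : ℤ := (w.inits.map mu).foldr max 0

/-- λ(w): negative of the minimum position visited. -/
def lam (w : List Bool) : ℤ := -((w.inits.map mu).foldr min 0)

/-- The formal inverse word: reverse and swap x ↔ x̄. -/
def winv (w : List Bool) : List Bool := w.reverse.map (fun b => !b)

/-- The word u # v^inv over the alphabet {x, x̄, #} (encoded as `Option Bool`). -/
def emb (u v : List Bool) : List (Option Bool) :=
  u.map some ++ [none] ++ (winv v).map some

/-- L_ν = {u # v^inv : ν(u) = ν(v), μ(u) = μ(v)}. -/
def Lnu : Language (Option Bool) :=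
  {w | ∃ u v : List Bool, w = emb u v ∧ nu u = nu v ∧ mu u = mu v}

-- Terminal and nonterminal symbols (nonterminals: S = 0, T = 1, Z = 2).
abbrev xT : Symbol (Option Bool) (Fin 3) := Symbol.terminal (some true)
abbrev xbT : Symbol (Option Bool) (Fin 3) := Symbol.terminal (some false)
abbrev hashT : Symbol (Option Bool) (Fin 3) := Symbol.terminal none
abbrev SN : Symbol (Option Bool) (Fin 3) := Symbol.nonterminal 0
abbrev TN : Symbol (Option Bool) (Fin 3) := Symbol.nonterminal 1
abbrev ZN : Symbol (Option Bool) (Fin 3) := Symbol.nonterminal 2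

noncomputable instance : DecidableEq (ContextFreeRule (Option Bool) (Fin 3)) :=
  Classical.decEq _

/-- The grammar S → ZSZ | xSx̄ | T;  T → ZTZ | x̄Tx | #;  Z → ZZ | x̄Zx | ε. -/
noncomputable def gNu : ContextFreeGrammar (Option Bool) where
  NT := Fin 3
  initial := 0
  rules :=
    {⟨0, [ZN, SN, ZN]⟩, ⟨0, [xT, SN, xbT]⟩, ⟨0, [TN]⟩,
     ⟨1, [ZN, TN, ZN]⟩, ⟨1, [xbT, TN, xT]⟩, ⟨1, [hashT]⟩,
     ⟨2, [ZN, ZN]⟩, ⟨2, [xbT, ZN, xT]⟩, ⟨2, []⟩}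





@[simp] lemma mu_nil : mu [] = 0 := rfl
@[simp] lemma mu_cons (b : Bool) (w : List Bool) : mu (b :: w) = step b + mu w := rfl
@[simp] lemma mu_append (a b : List Bool) : mu (a ++ b) = mu a + mu b := by simp [mu]

def nuR : List Bool → ℤ
  | [] => 0
  | b :: w => max 0 (step b + nuR w)

private lemma foldr_max_shift (c : ℤ) (l : List ℤ) (b : ℤ) :
    (l.map (c + ·)).foldr max (c + b) = c + l.foldr max b := by
  induction l with
  | nil => rfl
  | cons a l ih => simp only [List.map_cons, List.foldr_cons, ih, max_add_add_left]

private lemma nu_aux (w : List Bool) : ∀ c : ℤ,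
    (w.inits.map mu).foldr max c = max c (nuR w) := by
  induction w with
  | nil => intro c; simp [nuR, max_comm]
  | cons b w ih =>
    intro c
    have h1 : (b :: w).inits = [] :: w.inits.map (b :: ·) := by simp [List.inits]
    rw [h1]
    have h2 : ((w.inits.map (b :: ·)).map mu) = (w.inits.map mu).map (step b + ·) := by
      simp [List.map_map]
    simp only [List.map_cons, mu_nil, List.foldr_cons, h2]
    have h3 : step b + (c - step b) = c := by ring
    rw [← h3, foldr_max_shift, ih (c - step b), nuR]
    simp only [max_def]; split_ifs <;> omega

lemma nu_eq_nuR (w : List Bool) : nu w = nuR w := by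
  have := nu_aux w 0
  rw [nu, this]
  have : (0:ℤ) ≤ nuR w := by
    induction w with
    | nil => simp [nuR]
    | cons b w ih => simp [nuR]
  omega

@[simp] lemma nu_nil : nu [] = 0 := rfl
lemma nu_cons (b : Bool) (w : List Bool) : nu (b :: w) = max 0 (step b + nu w) := by
  rw [nu_eq_nuR, nu_eq_nuR, nuR]

lemma nu_nonneg (w : List Bool) : 0 ≤ nu w := by
  induction w with
  | nil => simp
  | cons b w ih => rw [nu_cons]; exact le_max_left _ _

lemma nu_append (a b : List Bool) : nu (a ++ b) = max (nu a) (mu a + nu b) := by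
  induction a with
  | nil => simp [nu_nonneg b, max_eq_right]
  | cons c a ih =>
    simp only [List.cons_append, nu_cons, ih, mu_cons]
    simp only [max_def]; split_ifs <;> omega

lemma mu_le_nu (w : List Bool) : mu w ≤ nu w := by
  induction w with
  | nil => simp
  | cons b w ih =>
    rw [nu_cons, mu_cons]
    have := le_max_right (0:ℤ) (step b + nu w)
    omega

lemma mu_take_le_nu (w : List Bool) (i : ℕ) : mu (w.take i) ≤ nu w := by
  conv_rhs => rw [← List.take_append_drop i w]
  rw [nu_append]
  exact le_trans (mu_le_nu _) (le_max_left _ _)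

lemma nu_le_of_forall {w : List Bool} {c : ℤ} (hc : 0 ≤ c)
    (h : ∀ i, mu (w.take i) ≤ c) : nu w ≤ c := by
  induction w generalizing c with
  | nil => simpa using hc
  | cons b w ih =>
    rw [nu_cons, max_le_iff]
    refine ⟨hc, ?_⟩
    have hb : step b ≤ c := by have := h 1; simpa using this
    have hc' : 0 ≤ c - step b := by
      have h0 := nu_nonneg w
      rcases b with _ | _ <;> simp [step] at hb ⊢ <;> omega
    have := ih hc' (fun i => by have := h (i + 1); simp at this; omega)
    omega

lemma nu_achieved (w : List Bool) : ∃ i, i ≤ w.length ∧ mu (w.take i) = nu w := by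
  induction w with
  | nil => exact ⟨0, by simp⟩
  | cons b w ih =>
    rcases ih with ⟨i, hi, hmu⟩
    rw [nu_cons]
    rcases le_or_gt (step b + nu w) 0 with h | h
    · exact ⟨0, by simp [max_eq_left h]⟩
    · refine ⟨i + 1, by simpa using hi, ?_⟩
      rw [max_eq_right (le_of_lt h)]
      simp [hmu]




@[simp] lemma step_not (b : Bool) : step (!b) = - step b := by cases b <;> simp [step]

@[simp] lemma winv_nil : winv [] = [] := rfl
lemma winv_append (a b : List Bool) : winv (a ++ b) = winv b ++ winv a := by
  simp [winv]
lemma winv_cons (b : Bool) (w : List Bool) : winv (b :: w) = winv w ++ [!b] := by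
  simp [winv]
@[simp] lemma winv_length (w : List Bool) : (winv w).length = w.length := by simp [winv]
@[simp] lemma mu_winv (w : List Bool) : mu (winv w) = - mu w := by
  induction w with
  | nil => simp
  | cons b w ih => rw [winv_cons]; simp [ih]

lemma mu_drop (w : List Bool) (i : ℕ) : mu (w.drop i) = mu w - mu (w.take i) := by
  have h := mu_append (w.take i) (w.drop i)
  rw [List.take_append_drop] at h
  omega

lemma winv_take {w : List Bool} {k : ℕ} (hk : k ≤ w.length) :
    (winv w).take k = winv (w.drop (w.length - k)) := by
  conv_lhs => rw [← List.take_append_drop (w.length - k) w]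
  rw [winv_append]
  exact List.take_left' (by simp; omega)

lemma zword_winv {w : List Bool} (hn : nu w = 0) (hm : mu w = 0) :
    nu (winv w) = 0 ∧ mu (winv w) = 0 := by
  refine ⟨le_antisymm ?_ (nu_nonneg _), by simp [hm]⟩
  apply nu_le_of_forall le_rfl
  intro i
  rcases le_or_gt i w.length with hi | hi
  · rw [winv_take hi, mu_winv, mu_drop, hm]
    have := mu_take_le_nu w (w.length - i)
    omega
  · rw [List.take_of_length_le (by simpa using hi.le), mu_winv, hm]; simp

@[simp] lemma winv_winv (w : List Bool) : winv (winv w) = w := by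
  simp only [winv, List.map_reverse, List.reverse_reverse, List.map_map]
  have : ((fun b => !b) ∘ fun b : Bool => !b) = id := by funext b; simp
  simp [this]

lemma step_cases (b : Bool) : step b = 1 ∨ step b = -1 := by cases b <;> simp [step]

lemma mu_take_succ (u : List Bool) (k : ℕ) (hk : k < u.length) :
    mu (u.take (k + 1)) = mu (u.take k) + step u[k] := by
  rw [List.take_succ, List.getElem?_eq_getElem hk]
  simp only [Option.toList_some, mu_append]
  simp [mu]

lemma split_at (u : List Bool) (k : ℕ) (hk : k < u.length) :
    u = u.take k ++ u[k] :: u.drop (k + 1) := by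
  conv_lhs => rw [← List.take_append_drop k u]
  rw [List.drop_eq_getElem_cons hk]

lemma mu_take_add (u : List Bool) (m i : ℕ) :
    mu (u.take (m + i)) = mu (u.take m) + mu ((u.drop m).take i) := by
  rw [List.take_add, mu_append]

/-! ### Semantics for soundness -/

def LZw : Language (Option Bool) :=
  {w | ∃ z : List Bool, w = z.map some ∧ nu z = 0 ∧ mu z = 0}
def LTw : Language (Option Bool) :=
  {w | ∃ u v : List Bool, w = emb u v ∧ nu u = 0 ∧ nu v = 0 ∧ mu u = mu v}

def LN (n : Fin 3) : Language (Option Bool) :=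
  if n = 0 then Lnu else if n = 1 then LTw else LZw

@[simp] lemma LN_0 : LN 0 = Lnu := rfl
@[simp] lemma LN_1 : LN 1 = LTw := rfl
@[simp] lemma LN_2 : LN 2 = LZw := rfl

def interp : Symbol (Option Bool) (Fin 3) → Language (Option Bool)
  | .terminal a => {[a]}
  | .nonterminal n => LN n

@[simp] lemma interp_terminal {a : Option Bool} {w : List (Option Bool)} :
    w ∈ interp (Symbol.terminal a) ↔ w = [a] := Iff.rfl
@[simp] lemma interp_nonterminal (n : Fin 3) :
    interp (Symbol.nonterminal n) = LN n := rfl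

def Matches : List (Symbol (Option Bool) (Fin 3)) → List (Option Bool) → Prop
  | [], w => w = []
  | s :: l, w => ∃ w₁ w₂, w = w₁ ++ w₂ ∧ w₁ ∈ interp s ∧ Matches l w₂

lemma matches_nil {w : List (Option Bool)} : Matches [] w ↔ w = [] := Iff.rfl
lemma matches_cons {s : Symbol (Option Bool) (Fin 3)} {l w} :
    Matches (s :: l) w ↔ ∃ w₁ w₂, w = w₁ ++ w₂ ∧ w₁ ∈ interp s ∧ Matches l w₂ := Iff.rfl

lemma matches_single {s : Symbol (Option Bool) (Fin 3)} {w : List (Option Bool)} :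
    Matches [s] w ↔ w ∈ interp s := by
  rw [matches_cons]
  constructor
  · rintro ⟨w₁, w₂, rfl, h₁, h₂⟩
    rw [show w₂ = [] from h₂]
    simpa using h₁
  · intro h; exact ⟨w, [], by simp, h, rfl⟩

lemma matches_append {l₁ l₂ : List (Symbol (Option Bool) (Fin 3))} {w : List (Option Bool)} :
    Matches (l₁ ++ l₂) w ↔ ∃ w₁ w₂, w = w₁ ++ w₂ ∧ Matches l₁ w₁ ∧ Matches l₂ w₂ := by
  induction l₁ generalizing w with
  | nil =>
    constructor
    · intro h; exact ⟨[], w, rfl, rfl, h⟩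
    · rintro ⟨w₁, w₂, rfl, h₁, h₂⟩
      rw [show w₁ = [] from h₁]; exact h₂
  | cons s l ih =>
    rw [List.cons_append, matches_cons]
    constructor
    · rintro ⟨a, b, rfl, ha, hb⟩
      rcases ih.1 hb with ⟨b₁, b₂, rfl, h₁, h₂⟩
      exact ⟨a ++ b₁, b₂, by simp, matches_cons.2 ⟨a, b₁, rfl, ha, h₁⟩, h₂⟩
    · rintro ⟨w₁, w₂, rfl, hm, h₂⟩
      rcases matches_cons.1 hm with ⟨a, b, rfl, ha, hb⟩
      exact ⟨a, b ++ w₂, by simp, ha, ih.2 ⟨b, w₂, rfl, hb, h₂⟩⟩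

lemma matches_triple {s₁ s₂ s₃ : Symbol (Option Bool) (Fin 3)} {w : List (Option Bool)} :
    Matches [s₁, s₂, s₃] w ↔
      ∃ a b c, w = a ++ b ++ c ∧ a ∈ interp s₁ ∧ b ∈ interp s₂ ∧ c ∈ interp s₃ := by
  constructor
  · rintro ⟨a, x, rfl, ha, b, y, rfl, hb, hy⟩
    rcases matches_single.1 hy with hc
    exact ⟨a, b, y, by simp, ha, hb, hc⟩
  · rintro ⟨a, b, c, rfl, ha, hb, hc⟩
    exact ⟨a, b ++ c, by simp, ha, b, c, rfl, hb, matches_single.2 hc⟩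

lemma matches_terminal (w : List (Option Bool)) :
    Matches (w.map Symbol.terminal) w := by
  induction w with
  | nil => exact rfl
  | cons a w ih => exact ⟨[a], w, rfl, rfl, ih⟩

lemma emb_split (z u z' v : List Bool) :
    emb (z ++ u) (z' ++ v) = z.map some ++ emb u v ++ (winv z').map some := by
  simp [emb, winv_append]

lemma emb_cons (b b' : Bool) (u v : List Bool) :
    emb (b :: u) (b' :: v) = some b :: (emb u v ++ [some (!b')]) := by
  simp [emb, winv_cons]

@[simp] lemma emb_nil : emb [] [] = [none] := rfl

lemma rule_sound : ∀ r ∈ gNu.rules, ∀ w : List (Option Bool),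
    Matches r.output w → w ∈ LN r.input := by
  intro r hr w hw
  change ContextFreeRule (Option Bool) (Fin 3) at r
  change r ∈ (insert _ _ : Finset (ContextFreeRule (Option Bool) (Fin 3))) at hr
  simp only [Finset.mem_insert, Finset.mem_singleton] at hr
  rcases hr with rfl | rfl | rfl | rfl | rfl | rfl | rfl | rfl | rfl <;>
    dsimp only at hw ⊢
  -- S → ZSZ
  · rw [matches_triple] at hw
    obtain ⟨a, b, c, rfl, ha, hb, hc⟩ := hw
    simp only [interp_nonterminal, LN_0, LN_1, LN_2] at ha hb hc
    obtain ⟨z, rfl, hz1, hz2⟩ := ha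
    obtain ⟨u, v, rfl, hn, hm⟩ := hb
    obtain ⟨z', rfl, hz1', hz2'⟩ := hc
    obtain ⟨hwn, hwm⟩ := zword_winv hz1' hz2'
    refine ⟨z ++ u, winv z' ++ v, by rw [emb_split, winv_winv], ?_, ?_⟩
    · have e1 : nu (z ++ u) = nu u := by
        rw [nu_append, hz1, hz2]; simp [max_eq_right (nu_nonneg u)]
      have e2 : nu (winv z' ++ v) = nu v := by
        rw [nu_append, hwn, hwm]; simp [max_eq_right (nu_nonneg v)]
      rw [e1, e2, hn]
    · simp [hz2, hwm, hm]
  -- S → xSx̄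
  · rw [matches_triple] at hw
    obtain ⟨a, b, c, rfl, ha, hb, hc⟩ := hw
    rw [interp_terminal] at ha hc
    subst ha; subst hc
    simp only [interp_nonterminal, LN_0] at hb
    obtain ⟨u, v, rfl, hn, hm⟩ := hb
    refine ⟨true :: u, true :: v, by rw [emb_cons]; simp, ?_, ?_⟩
    · rw [nu_cons, nu_cons, hn]
    · simp [hm]
  -- S → T
  · rw [matches_single] at hw
    simp only [interp_nonterminal, LN_1] at hw
    obtain ⟨u, v, rfl, h1, h2, h3⟩ := hw
    exact ⟨u, v, rfl, by rw [h1, h2], h3⟩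
  -- T → ZTZ
  · rw [matches_triple] at hw
    obtain ⟨a, b, c, rfl, ha, hb, hc⟩ := hw
    simp only [interp_nonterminal, LN_1, LN_2] at ha hb hc
    obtain ⟨z, rfl, hz1, hz2⟩ := ha
    obtain ⟨u, v, rfl, hnu, hnv, hm⟩ := hb
    obtain ⟨z', rfl, hz1', hz2'⟩ := hc
    obtain ⟨hwn, hwm⟩ := zword_winv hz1' hz2'
    refine ⟨z ++ u, winv z' ++ v, by rw [emb_split, winv_winv], ?_, ?_, ?_⟩
    · rw [nu_append, hz1, hz2, hnu]; simp
    · rw [nu_append, hwn, hwm, hnv]; simp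
    · simp [hz2, hwm, hm]
  -- T → x̄Tx
  · rw [matches_triple] at hw
    obtain ⟨a, b, c, rfl, ha, hb, hc⟩ := hw
    rw [interp_terminal] at ha hc
    subst ha; subst hc
    simp only [interp_nonterminal, LN_1] at hb
    obtain ⟨u, v, rfl, hnu, hnv, hm⟩ := hb
    refine ⟨false :: u, false :: v, by rw [emb_cons]; simp, ?_, ?_, ?_⟩
    · rw [nu_cons, hnu]; simp [step]
    · rw [nu_cons, hnv]; simp [step]
    · simp [hm]
  -- T → #
  · rw [matches_single] at hw
    rw [interp_terminal] at hw
    subst hw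
    exact ⟨[], [], rfl, rfl, rfl, rfl⟩
  -- Z → ZZ
  · obtain ⟨a, x, rfl, ha, hx⟩ := hw
    rw [matches_single] at hx
    simp only [interp_nonterminal, LN_2] at ha hx
    obtain ⟨z, rfl, hz1, hz2⟩ := ha
    obtain ⟨z', rfl, hz1', hz2'⟩ := hx
    refine ⟨z ++ z', by simp, ?_, by simp [hz2, hz2']⟩
    rw [nu_append, hz1, hz2, hz1']; simp
  -- Z → x̄Zx
  · rw [matches_triple] at hw
    obtain ⟨a, b, c, rfl, ha, hb, hc⟩ := hw
    rw [interp_terminal] at ha hc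
    subst ha; subst hc
    simp only [interp_nonterminal, LN_2] at hb
    obtain ⟨z, rfl, hz1, hz2⟩ := hb
    refine ⟨false :: (z ++ [true]), by simp, ?_, ?_⟩
    · have h1 : nu (z ++ [true]) = 1 := by
        rw [nu_append, hz1, hz2]; simp [nu_cons, step]
      rw [nu_cons, h1]; simp [step]
    · simp [hz2, step]
  -- Z → ε
  · rw [matches_nil] at hw
    subst hw
    exact ⟨[], by simp, by simp, by simp⟩

lemma produces_matches {α β : List (Symbol (Option Bool) (Fin 3))} {w : List (Option Bool)}
    (h : gNu.Produces α β) (hm : Matches β w) : Matches α w := by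
  obtain ⟨r, hr, hrw⟩ := h
  obtain ⟨p, q, rfl, rfl⟩ := hrw.exists_parts
  obtain ⟨ab, c, rfl, hab, hc⟩ := matches_append.1 hm
  obtain ⟨a, b, rfl, ha, hb⟩ := matches_append.1 hab
  refine matches_append.2 ⟨a ++ b, c, rfl, matches_append.2 ⟨a, b, rfl, ha, ?_⟩, hc⟩
  exact matches_single.2 (by exact rule_sound r hr b hb)

lemma derives_matches {α β : List (Symbol (Option Bool) (Fin 3))} {w : List (Option Bool)}
    (h : gNu.Derives α β) : Matches β w → Matches α w := by
  induction h with
  | refl => exact id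
  | tail _ hp ih => exact fun hm => ih (produces_matches hp hm)

/-! ### Completeness: derivation combinators -/

def TM (w : List Bool) : List (Symbol (Option Bool) (Fin 3)) :=
  w.map (fun b => Symbol.terminal (some b))

@[simp] lemma TM_nil : TM [] = [] := rfl
@[simp] lemma TM_append (a b : List Bool) : TM (a ++ b) = TM a ++ TM b := by simp [TM]
@[simp] lemma TM_cons (b : Bool) (w : List Bool) :
    TM (b :: w) = Symbol.terminal (some b) :: TM w := rfl
@[simp] lemma TM_some_map (w : List Bool) :
    (w.map some).map (Symbol.terminal : Option Bool → Symbol (Option Bool) (Fin 3)) = TM w := by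
  simp [TM]

lemma emb_TM (u v : List Bool) :
    (emb u v).map Symbol.terminal = TM u ++ [hashT] ++ TM (winv v) := by
  simp only [emb, TM, List.map_append, List.map_map]
  rfl

lemma prod_rule {i : Fin 3} {o : List (Symbol (Option Bool) (Fin 3))}
    (h : (⟨i, o⟩ : ContextFreeRule (Option Bool) (Fin 3)) ∈ gNu.rules) :
    gNu.Produces [Symbol.nonterminal i] o :=
  ⟨⟨i, o⟩, h, ContextFreeRule.Rewrites.input_output⟩

abbrev Sym3 : Type := Symbol (Option Bool) (Fin 3)

lemma deriv_pair {A B : Sym3} {a b : List Sym3}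
    (hA : gNu.Derives [A] a) (hB : gNu.Derives [B] b) :
    gNu.Derives [A, B] (a ++ b) := by
  have h1 : gNu.Derives (([A] ++ [B] : List Sym3)) ((a ++ [B] : List Sym3)) :=
    hA.append_right [B]
  exact h1.trans (hB.append_left a)

lemma deriv_triple {A B C : Sym3} {a b c : List Sym3}
    (hA : gNu.Derives [A] a) (hB : gNu.Derives [B] b) (hC : gNu.Derives [C] c) :
    gNu.Derives [A, B, C] (a ++ b ++ c) := by
  have h1 : gNu.Derives (([A] ++ [B, C] : List Sym3)) ((a ++ [B, C] : List Sym3)) :=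
    hA.append_right [B, C]
  have h2 : gNu.Derives (([B] ++ [C] : List Sym3)) ((b ++ [C] : List Sym3)) :=
    hB.append_right [C]
  have h3 : gNu.Derives ((b ++ [C] : List Sym3)) ((b ++ c : List Sym3)) := hC.append_left b
  have h4 : gNu.Derives ((a ++ [B, C] : List Sym3)) ((a ++ (b ++ c) : List Sym3)) :=
    ((h2.trans h3).append_left a)
  have h5 := (h1.trans h4)
  have e : (a ++ (b ++ c) : List Sym3) = a ++ b ++ c := by simp
  rw [e] at h5
  exact h5

/-! ### Decomposition lemmas -/

lemma zdecomp {w : List Bool} (hne : w ≠ []) (hn : nu w = 0) (hm : mu w = 0) :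
    (∃ a b, w = a ++ b ∧ a ≠ [] ∧ b ≠ [] ∧ nu a = 0 ∧ mu a = 0 ∧ nu b = 0 ∧ mu b = 0) ∨
    (∃ a, w = false :: (a ++ [true]) ∧ nu a = 0 ∧ mu a = 0) := by
  classical
  have hlen : 0 < w.length := List.length_pos_iff.2 hne
  have hP : ∃ j, 1 ≤ j ∧ mu (w.take j) = 0 :=
    ⟨w.length, hlen, by rw [List.take_length]; exact hm⟩
  set j := Nat.find hP with hjdef
  obtain ⟨hj1, hj2⟩ : 1 ≤ j ∧ mu (w.take j) = 0 := Nat.find_spec hP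
  have hjle : j ≤ w.length := Nat.find_min' hP ⟨hlen, by rw [List.take_length]; exact hm⟩
  have hneg : ∀ i, 1 ≤ i → i < j → mu (w.take i) ≤ -1 := by
    intro i h1 h2
    have h3 := Nat.find_min hP h2
    have h4 := mu_take_le_nu w i
    rw [hn] at h4
    simp only [not_and] at h3
    have := h3 h1
    omega
  rcases lt_or_eq_of_le hjle with hjlt | hjeq
  · -- w = take j ++ drop j, both Z-words
    left
    refine ⟨w.take j, w.drop j, (List.take_append_drop j w).symm, ?_, ?_, ?_, hj2, ?_, ?_⟩
    · intro h; have := congrArg List.length h; simp [min_eq_left hjle] at this; omega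
    · intro h; have := congrArg List.length h; simp at this; omega
    · refine le_antisymm (nu_le_of_forall le_rfl ?_) (nu_nonneg _)
      intro i
      rw [List.take_take]
      rcases Nat.lt_or_ge (min i j) 1 with h | h
      · interval_cases h' : min i j
        · simp
      · rcases lt_or_eq_of_le (min_le_right i j) with h' | h'
        · exact le_trans (hneg _ h h') (by norm_num)
        · rw [h']; omega
    · -- nu of drop
      have := nu_append (w.take j) (w.drop j)
      rw [List.take_append_drop, hn, hj2] at this
      have h1 := nu_nonneg (w.take j)
      have h2 := nu_nonneg (w.drop j)
      simp only [max_def] at this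
      split_ifs at this <;> omega
    · rw [mu_drop, hm, hj2]; ring
  · -- w = false :: a ++ [true]
    right
    have hlen2 : 2 ≤ w.length := by
      rcases Nat.lt_or_ge w.length 2 with h | h
      · exfalso
        have h1 : w.length = 1 := by omega
        obtain ⟨c, hc⟩ := List.length_eq_one_iff.1 h1
        subst hc
        cases c <;> simp [mu, step] at hm
      · exact h
    have h1j : 1 < j := by omega
    -- first letter is false
    obtain ⟨c, t, rfl⟩ : ∃ c t, w = c :: t := by
      cases w with
      | nil => exact absurd rfl hne
      | cons c t => exact ⟨c, t, rfl⟩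
    have hc : c = false := by
      have h := hneg 1 le_rfl h1j
      have he : mu (List.take 1 (c :: t)) = step c := by simp [mu]
      rw [he] at h
      cases c
      · rfl
      · exfalso; have hs : step true = (1 : ℤ) := by simp [step]
        omega
    subst hc
    -- last letter
    obtain ht | ⟨a, d, had⟩ := t.eq_nil_or_concat
    · subst ht; simp at hlen2
    rw [List.concat_eq_append] at had
    subst had
    have hj' : j = a.length + 2 := by
      rw [hjeq]; simp
    have htk : (false :: (a ++ [d])).take (a.length + 1) = false :: a := by
      simp [List.take_append_of_le_length]
    have hmu1 : mu a ≤ 0 := by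
      have h := hneg (a.length + 1) (by omega) (by omega)
      rw [htk] at h
      have he : mu (false :: a) = -1 + mu a := by simp [step]
      omega
    have hstep : step false = (-1 : ℤ) := by simp [step]
    have hmw : -1 + mu a + step d = 0 := by
      have := hm
      simp only [mu_cons, mu_append, hstep] at this
      simp only [mu_cons, mu_nil] at this
      omega
    have hd : d = true := by
      cases d
      · exfalso; rw [hstep] at hmw; omega
      · rfl
    subst hd
    have hma : mu a = 0 := by
      have hs : step true = (1 : ℤ) := by simp [step]
      omega
    refine ⟨a, rfl, ?_, hma⟩
    refine le_antisymm (nu_le_of_forall le_rfl ?_) (nu_nonneg _)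
    intro i
    have h1 : a.take i = a.take (min i a.length) := by
      rcases le_total i a.length with h | h
      · rw [min_eq_left h]
      · rw [min_eq_right h, List.take_of_length_le h, List.take_length]
    have h2 : (false :: (a ++ [true])).take (min i a.length + 1)
        = false :: a.take (min i a.length) := by
      simp [List.take_append_of_le_length (min_le_right i a.length)]
    have h3 := hneg (min i a.length + 1) (by omega) (by omega)
    rw [h2] at h3
    have he : mu (false :: a.take (min i a.length)) = -1 + mu (a.take (min i a.length)) := by
      simp [step]
    rw [h1]
    omega

lemma last_zero {u : List Bool} (hn : nu u = 0) (hm : mu u < 0) :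
    ∃ z u', u = z ++ false :: u' ∧ nu z = 0 ∧ mu z = 0 ∧ nu u' = 0 ∧ mu u' = mu u + 1 := by
  classical
  set k := Nat.findGreatest (fun j => mu (u.take j) = 0) u.length with hkdef
  have hk0 : mu (u.take k) = 0 := by
    have h := Nat.findGreatest_spec (P := fun j => mu (u.take j) = 0)
      (m := 0) (n := u.length) (Nat.zero_le _) rfl
    exact h
  have hkle : k ≤ u.length := Nat.findGreatest_le _
  have hgr : ∀ m, k < m → m ≤ u.length → mu (u.take m) ≠ 0 := by
    intro m h1 h2
    exact Nat.findGreatest_is_greatest h1 h2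
  have hneg : ∀ m, k < m → mu (u.take m) ≤ -1 := by
    intro m h1
    rcases le_or_gt m u.length with h2 | h2
    · have := hgr m h1 h2
      have := mu_take_le_nu u m
      omega
    · rw [List.take_of_length_le h2.le]
      omega
  have hklt : k < u.length := by
    rcases lt_or_eq_of_le hkle with h | h
    · exact h
    · exfalso; rw [h, List.take_length] at hk0; omega
  have hc : u[k] = false := by
    have h1 := hneg (k + 1) (Nat.lt_succ_self k)
    rw [mu_take_succ u k hklt, hk0] at h1
    cases hcc : u[k]
    · rfl
    · exfalso; rw [hcc] at h1; simp [step] at h1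
  refine ⟨u.take k, u.drop (k + 1), ?_, ?_, hk0, ?_, ?_⟩
  · conv_lhs => rw [split_at u k hklt]
    rw [hc]
  · refine le_antisymm (nu_le_of_forall le_rfl ?_) (nu_nonneg _)
    intro i
    rw [List.take_take]
    have := mu_take_le_nu u (min i k)
    omega
  · refine le_antisymm (nu_le_of_forall le_rfl ?_) (nu_nonneg _)
    intro i
    have h1 := mu_take_add u (k + 1) i
    have h2 := hneg (k + 1 + i) (by omega)
    have h4 : mu (u.take (k + 1)) = -1 := by
      rw [mu_take_succ u k hklt, hk0, hc]; simp [step]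
    omega
  · rw [mu_drop, mu_take_succ u k hklt, hk0, hc]
    simp [step]

lemma first_one {u : List Bool} (h1 : 1 ≤ nu u) :
    ∃ z u', u = z ++ true :: u' ∧ nu z = 0 ∧ mu z = 0 ∧
      nu u' = nu u - 1 ∧ mu u' = mu u - 1 := by
  classical
  obtain ⟨i0, hi0le, hi0⟩ := nu_achieved u
  have hP : ∃ j, 1 ≤ mu (u.take j) := ⟨i0, by omega⟩
  set j := Nat.find hP with hjdef
  have hj : 1 ≤ mu (u.take j) := Nat.find_spec hP
  have hjle : j ≤ i0 := Nat.find_min' hP (by omega)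
  have hmin : ∀ i, i < j → mu (u.take i) ≤ 0 := by
    intro i h
    have := Nat.find_min hP h
    omega
  have hj1 : 1 ≤ j := by
    by_contra h
    have : j = 0 := by omega
    rw [this] at hj
    simp at hj
  clear_value j
  obtain ⟨k, rfl⟩ : ∃ k, j = k + 1 := ⟨j - 1, by omega⟩
  have hklt : k < u.length := by omega
  have hk0 : mu (u.take k) ≤ 0 := hmin k (Nat.lt_succ_self k)
  have hstep := mu_take_succ u k hklt
  have hc : u[k] = true := by
    cases hcc : u[k]
    · exfalso; rw [hcc] at hstep; simp [step] at hstep; omega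
    · rfl
  have hcs : step u[k] = 1 := by rw [hc]; simp [step]
  have hk00 : mu (u.take k) = 0 := by omega
  have hkj : mu (u.take (k + 1)) = 1 := by omega
  refine ⟨u.take k, u.drop (k + 1), ?_, ?_, hk00, ?_, ?_⟩
  · conv_lhs => rw [split_at u k hklt]
    rw [hc]
  · refine le_antisymm (nu_le_of_forall le_rfl ?_) (nu_nonneg _)
    intro i
    rw [List.take_take]
    rcases lt_or_eq_of_le (min_le_right i k) with h | h
    · exact hmin _ (by omega)
    · rw [h]; omega
  · have hztake : nu (u.take k) = 0 := by
      refine le_antisymm (nu_le_of_forall le_rfl ?_) (nu_nonneg _)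
      intro i
      rw [List.take_take]
      rcases lt_or_eq_of_le (min_le_right i k) with h | h
      · exact hmin _ (by omega)
      · rw [h]; omega
    have hsplit : nu u = 1 + nu (u.drop (k + 1)) := by
      conv_lhs => rw [split_at u k hklt]
      rw [hc, nu_append, hk00, hztake, nu_cons]
      have h2 := nu_nonneg (u.drop (k + 1))
      have hst : step true = (1 : ℤ) := by simp [step]
      rw [hst]
      simp only [max_def]
      split_ifs <;> omega
    omega
  · rw [mu_drop]
    omega


/-! ### Rule membership -/

lemma memr0 : (⟨0, [ZN, SN, ZN]⟩ : ContextFreeRule (Option Bool) (Fin 3)) ∈ gNu.rules := by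
  show _ ∈ (insert _ _ : Finset (ContextFreeRule (Option Bool) (Fin 3))); simp
lemma memr1 : (⟨0, [xT, SN, xbT]⟩ : ContextFreeRule (Option Bool) (Fin 3)) ∈ gNu.rules := by
  show _ ∈ (insert _ _ : Finset (ContextFreeRule (Option Bool) (Fin 3))); simp
lemma memr2 : (⟨0, [TN]⟩ : ContextFreeRule (Option Bool) (Fin 3)) ∈ gNu.rules := by
  show _ ∈ (insert _ _ : Finset (ContextFreeRule (Option Bool) (Fin 3))); simp
lemma memr3 : (⟨1, [ZN, TN, ZN]⟩ : ContextFreeRule (Option Bool) (Fin 3)) ∈ gNu.rules := by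
  show _ ∈ (insert _ _ : Finset (ContextFreeRule (Option Bool) (Fin 3))); simp
lemma memr4 : (⟨1, [xbT, TN, xT]⟩ : ContextFreeRule (Option Bool) (Fin 3)) ∈ gNu.rules := by
  show _ ∈ (insert _ _ : Finset (ContextFreeRule (Option Bool) (Fin 3))); simp
lemma memr5 : (⟨1, [hashT]⟩ : ContextFreeRule (Option Bool) (Fin 3)) ∈ gNu.rules := by
  show _ ∈ (insert _ _ : Finset (ContextFreeRule (Option Bool) (Fin 3))); simp
lemma memr6 : (⟨2, [ZN, ZN]⟩ : ContextFreeRule (Option Bool) (Fin 3)) ∈ gNu.rules := by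
  show _ ∈ (insert _ _ : Finset (ContextFreeRule (Option Bool) (Fin 3))); simp
lemma memr7 : (⟨2, [xbT, ZN, xT]⟩ : ContextFreeRule (Option Bool) (Fin 3)) ∈ gNu.rules := by
  show _ ∈ (insert _ _ : Finset (ContextFreeRule (Option Bool) (Fin 3))); simp
lemma memr8 : (⟨2, ([] : List Sym3)⟩ : ContextFreeRule (Option Bool) (Fin 3)) ∈ gNu.rules := by
  show _ ∈ (insert _ _ : Finset (ContextFreeRule (Option Bool) (Fin 3))); simp

/-! ### Derivability of Z-words -/

lemma dZ_aux : ∀ n (z : List Bool), z.length ≤ n → nu z = 0 → mu z = 0 →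
    gNu.Derives [ZN] (TM z) := by
  intro n
  induction n with
  | zero =>
    intro z hl hn hm
    have hz : z = [] := List.eq_nil_of_length_eq_zero (by omega)
    subst hz
    exact (prod_rule memr8).single
  | succ n ih =>
    intro z hl hn hm
    rcases eq_or_ne z [] with rfl | hne
    · exact (prod_rule memr8).single
    rcases zdecomp hne hn hm with
      ⟨a, b, rfl, ha, hb, hna, hma, hnb, hmb⟩ | ⟨a, rfl, hna, hma⟩
    · have hpa := List.length_pos_iff.2 ha
      have hpb := List.length_pos_iff.2 hb
      rw [List.length_append] at hl
      have h2 : gNu.Derives [ZN, ZN] (TM a ++ TM b) :=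
        deriv_pair (ih a (by omega) hna hma) (ih b (by omega) hnb hmb)
      rw [TM_append]
      exact ((prod_rule memr6).single).trans h2
    · rw [List.length_cons, List.length_append] at hl
      have h2 : gNu.Derives [xbT, ZN, xT] (([xbT] : List Sym3) ++ TM a ++ [xT]) :=
        deriv_triple (ContextFreeGrammar.Derives.refl _) (ih a (by simp at hl; omega) hna hma) (ContextFreeGrammar.Derives.refl _)
      have heq : TM (false :: (a ++ [true])) = ([xbT] : List Sym3) ++ TM a ++ [xT] := by
        simp [TM]
      erw [heq]
      exact ((prod_rule memr7).single).trans h2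

lemma dZ (z : List Bool) (hn : nu z = 0) (hm : mu z = 0) : gNu.Derives [ZN] (TM z) :=
  dZ_aux z.length z le_rfl hn hm

lemma dT_aux : ∀ n (u v : List Bool), u.length + v.length ≤ n → nu u = 0 → nu v = 0 →
    mu u = mu v → gNu.Derives [TN] ((emb u v).map Symbol.terminal) := by
  intro n
  induction n with
  | zero =>
    intro u v hl hnu hnv hm
    have hu : u = [] := List.eq_nil_of_length_eq_zero (by omega)
    have hv : v = [] := List.eq_nil_of_length_eq_zero (by omega)
    subst hu; subst hv
    have heq : (emb [] []).map Symbol.terminal = ([hashT] : List Sym3) := rfl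
    erw [heq]
    exact (prod_rule memr5).single
  | succ n ih =>
    intro u v hl hnu hnv hm
    rcases lt_trichotomy (mu u) 0 with hlt | heq0 | hgt
    · have hvlt : mu v < 0 := by omega
      obtain ⟨z₁, u', rfl, hz1n, hz1m, hun, hum⟩ := last_zero hnu hlt
      obtain ⟨z₂, v', rfl, hz2n, hz2m, hvn, hvm⟩ := last_zero hnv hvlt
      have hw2 := zword_winv hz2n hz2m
      have hih : gNu.Derives [TN] ((emb u' v').map Symbol.terminal) := by
        apply ih u' v' ?_ hun hvn (by omega)
        rw [List.length_append, List.length_append, List.length_cons,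
          List.length_cons] at hl
        omega
      have hmid : gNu.Derives [TN]
          (([xbT] : List Sym3) ++ (emb u' v').map Symbol.terminal ++ [xT]) :=
        ((prod_rule memr4).single).trans
          (deriv_triple (ContextFreeGrammar.Derives.refl _) hih (ContextFreeGrammar.Derives.refl _))
      have hout : gNu.Derives [ZN, TN, ZN]
          (TM z₁ ++ (([xbT] : List Sym3) ++ (emb u' v').map Symbol.terminal ++ [xT])
            ++ TM (winv z₂)) :=
        deriv_triple (dZ z₁ hz1n hz1m) hmid (dZ (winv z₂) hw2.1 hw2.2)
      have heq : (emb (z₁ ++ false :: u') (z₂ ++ false :: v')).map Symbol.terminal =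
          TM z₁ ++ (([xbT] : List Sym3) ++ (emb u' v').map Symbol.terminal ++ [xT])
            ++ TM (winv z₂) := by
        rw [show (z₁ ++ false :: u') = z₁ ++ (false :: u') from rfl,
          show (z₂ ++ false :: v') = z₂ ++ (false :: v') from rfl,
          emb_split, emb_cons]
        simp [TM, Function.comp_def]
      erw [heq]
      exact ((prod_rule memr3).single).trans hout
    · have hmv : mu v = 0 := by omega
      have hw := zword_winv hnv hmv
      erw [emb_TM]
      exact ((prod_rule memr3).single).trans
        (deriv_triple (dZ u hnu heq0) ((prod_rule memr5).single) (dZ (winv v) hw.1 hw.2))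
    · exfalso
      have := mu_le_nu u
      omega

lemma dT (u v : List Bool) (hnu : nu u = 0) (hnv : nu v = 0) (hm : mu u = mu v) :
    gNu.Derives [TN] ((emb u v).map Symbol.terminal) :=
  dT_aux (u.length + v.length) u v le_rfl hnu hnv hm

lemma dS_aux : ∀ n (u v : List Bool), (nu u).toNat ≤ n → nu u = nu v →
    mu u = mu v → gNu.Derives [SN] ((emb u v).map Symbol.terminal) := by
  intro n
  induction n with
  | zero =>
    intro u v h hn hm
    have h0 : nu u = 0 := by have := nu_nonneg u; omega
    exact ((prod_rule memr2).single).trans (dT u v h0 (hn ▸ h0) hm)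
  | succ n ih =>
    intro u v h hn hm
    rcases le_or_gt (nu u) 0 with h0 | h1
    · have h0' : nu u = 0 := by have := nu_nonneg u; omega
      exact ((prod_rule memr2).single).trans (dT u v h0' (hn ▸ h0') hm)
    · have h1v : 1 ≤ nu v := by omega
      obtain ⟨z₁, u', rfl, hz1n, hz1m, hun, hum⟩ := first_one h1
      obtain ⟨z₂, v', rfl, hz2n, hz2m, hvn, hvm⟩ := first_one h1v
      have hw2 := zword_winv hz2n hz2m
      have hih : gNu.Derives [SN] ((emb u' v').map Symbol.terminal) := by
        apply ih u' v' (by omega) (by omega) (by omega)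
      have hmid : gNu.Derives [SN]
          (([xT] : List Sym3) ++ (emb u' v').map Symbol.terminal ++ [xbT]) :=
        ((prod_rule memr1).single).trans
          (deriv_triple (ContextFreeGrammar.Derives.refl _) hih (ContextFreeGrammar.Derives.refl _))
      have hout : gNu.Derives [ZN, SN, ZN]
          (TM z₁ ++ (([xT] : List Sym3) ++ (emb u' v').map Symbol.terminal ++ [xbT])
            ++ TM (winv z₂)) :=
        deriv_triple (dZ z₁ hz1n hz1m) hmid (dZ (winv z₂) hw2.1 hw2.2)
      have heq : (emb (z₁ ++ true :: u') (z₂ ++ true :: v')).map Symbol.terminal =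
          TM z₁ ++ (([xT] : List Sym3) ++ (emb u' v').map Symbol.terminal ++ [xbT])
            ++ TM (winv z₂) := by
        rw [show (z₁ ++ true :: u') = z₁ ++ (true :: u') from rfl,
          show (z₂ ++ true :: v') = z₂ ++ (true :: v') from rfl,
          emb_split, emb_cons]
        simp [TM, Function.comp_def]
      erw [heq]
      exact ((prod_rule memr0).single).trans hout

lemma dS (u v : List Bool) (hn : nu u = nu v) (hm : mu u = mu v) :
    gNu.Derives [SN] ((emb u v).map Symbol.terminal) :=
  dS_aux (nu u).toNat u v le_rfl hn hm

/-- L_ν is generated by the grammar `gNu`; hence L_ν is context-free. -/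
theorem stmt13 : gNu.language = Lnu ∧ Lnu.IsContextFree := by
  have hlang : gNu.language = Lnu := by
    ext w
    constructor
    · intro hw
      have hd : gNu.Derives [Symbol.nonterminal gNu.initial] (w.map Symbol.terminal) := hw
      have hmm : Matches [SN] w := derives_matches hd (matches_terminal w)
      have hmem := matches_single.1 hmm
      rwa [interp_nonterminal, LN_0] at hmem
    · rintro ⟨u, v, rfl, hn, hm⟩
      exact dS u v hn hm
  exact ⟨hlang, gNu, hlang⟩
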